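/- Consider a collection of M real matrices X^{(m)} (m ∈ Fin M) over N entities with dimensions d : Fin N → ℕ and cluster counts k : Fin N → ℕ, where row and column entity assignments r, c : Fin M → Fin N give X^{(m)} the shape d(r(m)) × d(c(m)). For each entity e let J^{[e]} be a real d(e) × k(e) matrix with orthonormal columns (J^{[e]ᵀ} J^{[e]} = I_{k(e)}), and define for each entity e the matrix M^{[e]} = Σ_{m : r(m)=e} (X^{(m)} J^{[c(m)]})(X^{(m)} J^{[c(m)]})ᵀ + Σ_{m : c(m)=e} (X^{(m)ᵀ} J^{[r(m)]})(X^{(m)ᵀ} J^{[r(m)]})ᵀ, and for each matrix m the association A^{(m)} = J^{[r(m)]ᵀ} X^{(m)} J^{[c(m)]}. Then Σ_{e=1}^{N} trace(J^{[e]ᵀ} M^{[e]} J^{[e]}) = 2 Σ_{m=1}^{M} ( ‖X^{(m)}‖_F² − ‖X^{(m)} − J^{[r(m)]} A^{(m)} J^{[c(m)]ᵀ}‖_F² ); consequently, over column-orthonormal J^{[e]}, minimizing the collective tri-factorization reconstruction error Σ_m ‖X^{(m)} − J^{[r(m)]} A^{(m)} J^{[c(m)]ᵀ}‖_F² is equivalent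 to maximizing the collective trace objective Σ_e trace(J^{[e]ᵀ} M^{[e]} J^{[e]}). -/
import Mathlib


open Matrix BigOperators

/-- Squared Frobenius norm of a real matrix: `∑ i, ∑ j, (X i j)^2`. -/
noncomputable def frobSq {m n : ℕ} (X : Matrix (Fin m) (Fin n) ℝ) : ℝ :=
  ∑ i, ∑ j, (X i j) ^ 2

lemma frobSq_eq_trace {m n : ℕ} (X : Matrix (Fin m) (Fin n) ℝ) :
    frobSq X = Matrix.trace (Xᵀ * X) := by
  simp only [frobSq, Matrix.trace, Matrix.diag, Matrix.mul_apply,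
    Matrix.transpose_apply, sq]
  rw [Finset.sum_comm]

lemma recon_aux {p q a b : ℕ} (X : Matrix (Fin p) (Fin q) ℝ)
    (Jr : Matrix (Fin p) (Fin a) ℝ) (Jc : Matrix (Fin q) (Fin b) ℝ)
    (hJr : Jrᵀ * Jr = 1) (hJc : Jcᵀ * Jc = 1) :
    frobSq X - frobSq (X - Jr * (Jrᵀ * X * Jc) * Jcᵀ) =
      Matrix.trace ((Jrᵀ * X * Jc)ᵀ * (Jrᵀ * X * Jc)) := by
  set A : Matrix (Fin a) (Fin b) ℝ := Jrᵀ * X * Jc with hAdef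
  have hY : (Jr * A * Jcᵀ)ᵀ * (Jr * A * Jcᵀ) = Jc * (Aᵀ * A) * Jcᵀ := by
    have key : Jrᵀ * (Jr * (A * Jcᵀ)) = A * Jcᵀ := by
      rw [← Matrix.mul_assoc, hJr, Matrix.one_mul]
    simp only [Matrix.transpose_mul, Matrix.transpose_transpose, Matrix.mul_assoc, key]
  have hXY : Matrix.trace (Xᵀ * (Jr * A * Jcᵀ)) = Matrix.trace (Aᵀ * A) := by
    have : Xᵀ * (Jr * A * Jcᵀ) = (Xᵀ * Jr * A) * Jcᵀ := by
      simp only [Matrix.mul_assoc]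
    rw [this, Matrix.trace_mul_comm]
    have : Jcᵀ * (Xᵀ * Jr * A) = Aᵀ * A := by
      rw [hAdef]
      simp only [Matrix.transpose_mul, Matrix.transpose_transpose, Matrix.mul_assoc]
    rw [this]
  have hYX : Matrix.trace ((Jr * A * Jcᵀ)ᵀ * X) = Matrix.trace (Aᵀ * A) := by
    rw [← Matrix.trace_transpose, Matrix.transpose_mul, Matrix.transpose_transpose, hXY]
  have hYY : Matrix.trace ((Jr * A * Jcᵀ)ᵀ * (Jr * A * Jcᵀ)) =
      Matrix.trace (Aᵀ * A) := by
    rw [hY, Matrix.trace_mul_comm, ← Matrix.mul_assoc, hJc, Matrix.one_mul]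
  rw [frobSq_eq_trace, frobSq_eq_trace]
  simp only [Matrix.transpose_sub, Matrix.sub_mul, Matrix.mul_sub,
    Matrix.trace_sub]
  rw [hXY, hYX, hYY]
  ring

lemma sum_dite_trace {N : ℕ} (d k : Fin N → ℕ)
    (J : ∀ e : Fin N, Matrix (Fin (d e)) (Fin (k e)) ℝ) (e0 : Fin N)
    (T : Matrix (Fin (d e0)) (Fin (d e0)) ℝ) :
    ∑ e : Fin N,
        Matrix.trace ((J e)ᵀ * (if h : e0 = e then h ▸ T else 0) * J e) =
      Matrix.trace ((J e0)ᵀ * T * J e0) := by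
  have h1 : ∀ e : Fin N,
      Matrix.trace ((J e)ᵀ * (if h : e0 = e then h ▸ T else 0) * J e) =
        if h : e0 = e then Matrix.trace ((J e)ᵀ * (h ▸ T) * J e) else 0 := by
    intro e
    rw [apply_dite (fun Y => Matrix.trace ((J e)ᵀ * Y * J e))]
    simp
  simp_rw [h1]
  rw [Finset.sum_dite_eq]
  simp

/-- Collective trace identity: for a collection of `M` matrices over `N` entities with
column-orthonormal cluster indicators `J^{[e]}`, weighted distance matrices `M^{[e]}` and
associations `A^{(m)} = J^{[r(m)]ᵀ} X^{(m)} J^{[c(m)]}`, we have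
`Σ_e trace(J^{[e]ᵀ} M^{[e]} J^{[e]}) = 2 Σ_m (‖X^{(m)}‖_F² − ‖X^{(m)} − J^{[r(m)]} A^{(m)} J^{[c(m)]ᵀ}‖_F²)`,
so minimizing the collective reconstruction error is equivalent to maximizing the collective
trace objective. -/
theorem collective_trace_eq_reconstruction {M N : ℕ}
    (d k : Fin N → ℕ) (r c : Fin M → Fin N)
    (X : ∀ m : Fin M, Matrix (Fin (d (r m))) (Fin (d (c m))) ℝ)
    (J : ∀ e : Fin N, Matrix (Fin (d e)) (Fin (k e)) ℝ)
    (hJ : ∀ e : Fin N, (J e)ᵀ * J e = 1)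
    (Mm : ∀ e : Fin N, Matrix (Fin (d e)) (Fin (d e)) ℝ)
    (hMm : ∀ e : Fin N, Mm e =
      (∑ m : Fin M, if h : r m = e then
          h ▸ ((X m * J (c m)) * (X m * J (c m))ᵀ) else 0)
      + (∑ m : Fin M, if h : c m = e then
          h ▸ (((X m)ᵀ * J (r m)) * ((X m)ᵀ * J (r m))ᵀ) else 0))
    (A : ∀ m : Fin M, Matrix (Fin (k (r m))) (Fin (k (c m))) ℝ)
    (hA : ∀ m : Fin M, A m = (J (r m))ᵀ * X m * J (c m)) :
    ∑ e : Fin N, Matrix.trace ((J e)ᵀ * Mm e * J e) =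
      2 * ∑ m : Fin M,
        (frobSq (X m) - frobSq (X m - J (r m) * A m * (J (c m))ᵀ)) := by
  -- rewrite RHS
  have hRHS : ∀ m : Fin M,
      frobSq (X m) - frobSq (X m - J (r m) * A m * (J (c m))ᵀ) =
        Matrix.trace ((A m)ᵀ * A m) := by
    intro m
    rw [hA m]
    exact recon_aux (X m) (J (r m)) (J (c m)) (hJ (r m)) (hJ (c m))
  simp_rw [hRHS, hMm]
  -- distribute
  have hsplit : ∀ e : Fin N,
      Matrix.trace ((J e)ᵀ *
        ((∑ m : Fin M, if h : r m = e then
            h ▸ ((X m * J (c m)) * (X m * J (c m))ᵀ) else 0)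
         + (∑ m : Fin M, if h : c m = e then
            h ▸ (((X m)ᵀ * J (r m)) * ((X m)ᵀ * J (r m))ᵀ) else 0)) * J e) =
      (∑ m : Fin M, Matrix.trace ((J e)ᵀ *
          (if h : r m = e then
            h ▸ ((X m * J (c m)) * (X m * J (c m))ᵀ) else 0) * J e))
      + (∑ m : Fin M, Matrix.trace ((J e)ᵀ *
          (if h : c m = e then
            h ▸ (((X m)ᵀ * J (r m)) * ((X m)ᵀ * J (r m))ᵀ) else 0) * J e)) := by
    intro e
    rw [Matrix.mul_add, Matrix.add_mul, Matrix.trace_add,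
      Matrix.mul_sum, Matrix.sum_mul, Matrix.trace_sum,
      Matrix.mul_sum, Matrix.sum_mul, Matrix.trace_sum]
  simp_rw [hsplit]
  rw [Finset.sum_add_distrib]
  conv_lhs =>
    congr
    · rw [Finset.sum_comm]
    · rw [Finset.sum_comm]
  have h1 : ∀ m : Fin M,
      ∑ e : Fin N, Matrix.trace ((J e)ᵀ *
          (if h : r m = e then
            h ▸ ((X m * J (c m)) * (X m * J (c m))ᵀ) else 0) * J e) =
        Matrix.trace ((A m)ᵀ * A m) := by
    intro m
    rw [sum_dite_trace d k J (r m) ((X m * J (c m)) * (X m * J (c m))ᵀ)]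
    have : (J (r m))ᵀ * ((X m * J (c m)) * (X m * J (c m))ᵀ) * J (r m) =
        ((J (r m))ᵀ * (X m * J (c m))) * ((J (r m))ᵀ * (X m * J (c m)))ᵀ := by
      simp only [Matrix.transpose_mul, Matrix.transpose_transpose, Matrix.mul_assoc]
    rw [this, Matrix.trace_mul_comm, hA m]
    simp only [Matrix.mul_assoc]
  have h2 : ∀ m : Fin M,
      ∑ e : Fin N, Matrix.trace ((J e)ᵀ *
          (if h : c m = e then
            h ▸ (((X m)ᵀ * J (r m)) * ((X m)ᵀ * J (r m))ᵀ) else 0) * J e) =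
        Matrix.trace ((A m)ᵀ * A m) := by
    intro m
    rw [sum_dite_trace d k J (c m) (((X m)ᵀ * J (r m)) * ((X m)ᵀ * J (r m))ᵀ)]
    have : (J (c m))ᵀ * (((X m)ᵀ * J (r m)) * ((X m)ᵀ * J (r m))ᵀ) * J (c m) =
        ((J (c m))ᵀ * ((X m)ᵀ * J (r m))) * ((J (c m))ᵀ * ((X m)ᵀ * J (r m)))ᵀ := by
      simp only [Matrix.transpose_mul, Matrix.transpose_transpose, Matrix.mul_assoc]
    rw [this, hA m]
    have hAt : (J (c m))ᵀ * ((X m)ᵀ * J (r m)) = ((J (r m))ᵀ * X m * J (c m))ᵀ := by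
      simp only [Matrix.transpose_mul, Matrix.transpose_transpose, Matrix.mul_assoc]
    rw [hAt, Matrix.transpose_transpose]
  simp_rw [h1, h2]
  rw [← Finset.sum_add_distrib, Finset.mul_sum]
  congr 1
  ext m
  ring
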